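/- Assume w_K(n) > 0 for every n ∈ ℕ. Then there exists a sequence (x_i)_{i≥1} in Ω such that limsup_{n→∞} sup_{m≥1} [ n · λ_n((1/m)[K(x_i,x_j)]_{1≤i,j≤m}) / w_K(n)² ] ≥ 1/e, where λ_n(A) denotes the n-th largest eigenvalue (counted with multiplicity) of a real symmetric matrix A, with λ_n(A) = 0 whenever n exceeds the size of A. In particular, for the fixed domain Ω, limsup_{n→∞} sup_μ n λ_n(O_{K,μ})/w_K(n)² ≥ 1/e, where the supremum over Borel probability measures μ on Ω is realized already on empirical measures μ_m = (1/m)Σ_{i=1}^m δ_{x_i}. -/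

import Mathlib

open MeasureTheory Filter
open scoped ENNReal

noncomputable section

/-- The Kolmogorov `n`-width of the image of `Ω` under `Φ` in the Hilbert space `H`. -/
def kolmWidth {E H : Type*} [NormedAddCommGroup H] [InnerProductSpace ℝ H]
    (Ω : Set E) (Φ : E → H) (n : ℕ) : ℝ :=
  ⨅ L : {L : Submodule ℝ H // ∃ s : Finset H, s.card ≤ n ∧ L = Submodule.span ℝ (s : Set H)},
    ⨆ x : Ω, Metric.infDist (Φ (x : E)) (L.1 : Set H)

/-- The Gram matrix `[K(x_i,x_j)]` of the points `x : Fin n → E`, where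
`K(x,y) = ⟪Φ x, Φ y⟫`. -/
def gramM {E H : Type*} [NormedAddCommGroup H] [InnerProductSpace ℝ H]
    (Φ : E → H) {n : ℕ} (x : Fin n → E) : Matrix (Fin n) (Fin n) ℝ :=
  Matrix.of fun i j => (inner ℝ (Φ (x i)) (Φ (x j)) : ℝ)

open scoped Classical in
/-- `nthEig A k` is the `(k+1)`-st largest eigenvalue (with multiplicity) of the real
symmetric matrix `A`, and `0` if `k` is at least the size of `A` (or `A` is not
symmetric). Thus `λ_n(A)` of the statement is `nthEig A (n-1)`. -/
def nthEig {m : ℕ} (A : Matrix (Fin m) (Fin m) ℝ) (k : ℕ) : ℝ :=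
  if hA : A.IsHermitian then
    ((List.ofFn hA.eigenvalues).insertionSort (· ≥ ·)).getD k 0
  else 0


set_option linter.unusedSectionVars false

section AuxA
open Metric Submodule Set Finset InnerProductSpace
variable {H : Type*} [NormedAddCommGroup H] [InnerProductSpace ℝ H]

instance instWFFin (M : ℕ) : WellFoundedLT (Fin M) := Finite.to_wellFoundedLT

variable {M : ℕ} (f : Fin M → H)

local notation "g" => gramSchmidt ℝ f

lemma aux_inner_f_gs_zero {i j : Fin M} (hij : i < j) : inner ℝ (f i) (g j) = (0:ℝ) := by
  rw [real_inner_comm]; exact gramSchmidt_inv_triangular ℝ f hij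

lemma aux_inner_f_gs_self (i : Fin M) : inner ℝ (f i) (g i) = (‖g i‖^2 : ℝ) := by
  conv_lhs => rw [gramSchmidt_def'' ℝ f i]
  rw [inner_add_left, sum_inner, real_inner_self_eq_norm_sq, Finset.sum_eq_zero, add_zero]
  intro k hk
  rw [inner_smul_left]
  have : inner ℝ (g k) (g i) = (0:ℝ) := gramSchmidt_orthogonal ℝ f (Finset.mem_Iio.1 hk).ne
  simp [this]

lemma aux_repr (hg : ∀ j, g j ≠ 0) (i : Fin M) :
    f i = ∑ j, ((inner ℝ (f i) (g j) : ℝ) / ‖g j‖^2) • g j := by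
  set v := f i - ∑ j, ((inner ℝ (f i) (g j) : ℝ) / ‖g j‖^2) • g j with hv
  have horth : ∀ l, inner ℝ (g l) v = (0:ℝ) := by
    intro l
    rw [hv, inner_sub_right, inner_sum]
    rw [Finset.sum_eq_single l]
    · rw [inner_smul_right, real_inner_self_eq_norm_sq,
        div_mul_cancel₀ _ (pow_ne_zero 2 (norm_ne_zero_iff.2 (hg l))), real_inner_comm, sub_self]
    · intro b _ hbl
      rw [inner_smul_right, gramSchmidt_orthogonal ℝ f (Ne.symm hbl), mul_zero]
    · intro h; exact absurd (Finset.mem_univ l) h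
  have hmem : v ∈ span ℝ (Set.range (gramSchmidt ℝ f)) := by
    apply Submodule.sub_mem
    · rw [span_gramSchmidt ℝ f]
      exact subset_span (Set.mem_range_self i)
    · exact Submodule.sum_mem _ fun j _ => Submodule.smul_mem _ _ (subset_span (Set.mem_range_self j))
  obtain ⟨c, hc⟩ := (mem_span_range_iff_exists_fun ℝ).1 hmem
  have : inner ℝ v v = (0:ℝ) := by
    rw [← hc, sum_inner, Finset.sum_eq_zero]
    intro j _
    rw [inner_smul_left, hc]
    simp [horth j]
  have hv0 : v = 0 := by rwa [inner_self_eq_zero] at this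
  have := sub_eq_zero.1 (hv ▸ hv0)
  exact this

lemma aux_det_gram (hg : ∀ j, g j ≠ 0) :
    (Matrix.of fun i j : Fin M => (inner ℝ (f i) (f j) : ℝ)).det = ∏ k, ‖g k‖^2 := by
  classical
  set B : Matrix (Fin M) (Fin M) ℝ :=
    Matrix.of fun i j => (inner ℝ (f i) (g j) : ℝ) / ‖g j‖^2 with hB
  have hfact : (Matrix.of fun i j : Fin M => (inner ℝ (f i) (f j) : ℝ))
      = B * Matrix.diagonal (fun j => (‖g j‖:ℝ)^2) * B.transpose := by
    ext i k
    rw [Matrix.mul_apply]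
    simp only [Matrix.mul_diagonal, Matrix.transpose_apply, Matrix.of_apply]
    conv_lhs => rw [aux_repr f hg k, inner_sum]
    refine Finset.sum_congr rfl fun x _ => ?_
    rw [inner_smul_right, hB]
    have hx : (‖g x‖:ℝ)^2 ≠ 0 := pow_ne_zero 2 (norm_ne_zero_iff.2 (hg x))
    simp only [Matrix.of_apply]
    field_simp
  have hBtri : B.BlockTriangular OrderDual.toDual := by
    intro i j hij
    have : i < j := hij
    rw [hB]
    simp only [Matrix.of_apply]
    rw [aux_inner_f_gs_zero f this, zero_div]
  have hBdet : B.det = 1 := by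
    rw [Matrix.det_of_lowerTriangular B hBtri]
    apply Finset.prod_eq_one
    intro i _
    rw [hB]
    simp only [Matrix.of_apply]
    rw [aux_inner_f_gs_self f i, div_self (pow_ne_zero 2 (norm_ne_zero_iff.2 (hg i)))]
  rw [hfact, Matrix.det_mul, Matrix.det_mul, Matrix.det_transpose, hBdet,
    Matrix.det_diagonal, one_mul, mul_one]

lemma aux_gs_mem_orth (k : Fin M) :
    g k ∈ (span ℝ (f '' Set.Iio k))ᗮ := by
  rw [← span_gramSchmidt_Iio ℝ f k]
  intro u hu
  induction hu using Submodule.span_induction with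
  | mem y hy =>
    obtain ⟨j, hj, rfl⟩ := hy
    exact gramSchmidt_orthogonal ℝ f (ne_of_lt hj)
  | zero => simp
  | add y z _ _ hy hz => rw [inner_add_left, hy, hz, add_zero]
  | smul c y _ hy => rw [inner_smul_left, hy, mul_zero]

lemma aux_sub_gs_mem_span (k : Fin M) :
    f k - g k ∈ span ℝ (f '' Set.Iio k) := by
  rw [← span_gramSchmidt_Iio ℝ f k]
  have := gramSchmidt_def ℝ f k
  have h2 : f k - g k = ∑ i ∈ Finset.Iio k,
      (orthogonalProjection (ℝ ∙ gramSchmidt ℝ f i) (f k) : H) := by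
    rw [this]; abel
  rw [h2]
  refine Submodule.sum_mem _ fun i hi => ?_
  have : (orthogonalProjection (ℝ ∙ g i) (f k) : H) ∈ (ℝ ∙ g i) := SetLike.coe_mem _
  have hsub : ({g i} : Set H) ⊆ g '' Set.Iio k :=
    Set.singleton_subset_iff.2 ⟨i, Finset.mem_Iio.1 hi, rfl⟩
  exact Submodule.span_mono hsub this

lemma aux_infDist_eq_norm_gs (k : Fin M) :
    Metric.infDist (f k) (span ℝ (f '' Set.Iio k) : Set H) = ‖g k‖ := by
  set K := span ℝ (f '' Set.Iio k) with hK
  have hp : f k - g k ∈ K := aux_sub_gs_mem_span f k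
  have hgo : g k ∈ Kᗮ := aux_gs_mem_orth f k
  have hne : (K : Set H).Nonempty := ⟨0, K.zero_mem⟩
  apply le_antisymm
  · have : Metric.infDist (f k) (K : Set H) ≤ dist (f k) (f k - g k) :=
      Metric.infDist_le_dist_of_mem hp
    rwa [dist_eq_norm, sub_sub_cancel] at this
  · rw [Metric.infDist_eq_iInf]
    haveI : Nonempty (K : Set H) := ⟨⟨0, K.zero_mem⟩⟩
    apply le_ciInf
    intro wc
    obtain ⟨w, hw⟩ := wc
    rw [dist_eq_norm]
    have hdecomp : f k - w = g k + ((f k - g k) - w) := by abel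
    have hmem2 : (f k - g k) - w ∈ K := Submodule.sub_mem _ hp hw
    have hinner : inner ℝ (g k) ((f k - g k) - w) = (0:ℝ) :=
      (Submodule.mem_orthogonal' _ _).1 hgo _ hmem2
    have hsq : ‖f k - w‖^2 = ‖g k‖^2 + ‖(f k - g k) - w‖^2 := by
      rw [hdecomp, norm_add_sq_real, hinner]
      ring
    nlinarith [norm_nonneg (f k - w), norm_nonneg (g k), norm_nonneg ((f k - g k) - w), sq_nonneg (‖(f k -g k) - w‖)]

section B
open Finset

variable {m : ℕ} {A : Matrix (Fin m) (Fin m) ℝ}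

lemma nthEig_eq (hA : A.IsHermitian) (k : ℕ) :
    nthEig A k = ((List.ofFn hA.eigenvalues).insertionSort (· ≥ ·)).getD k 0 := by
  rw [nthEig, dif_pos hA]

lemma sortedEig_length (hA : A.IsHermitian) :
    ((List.ofFn hA.eigenvalues).insertionSort (· ≥ ·)).length = m := by
  rw [List.length_insertionSort, List.length_ofFn]

lemma nthEig_mem (hA : A.IsHermitian) {k : ℕ} (hk : k < m) :
    ∃ i, hA.eigenvalues i = nthEig A k := by
  rw [nthEig_eq hA k]
  set l := (List.ofFn hA.eigenvalues).insertionSort (· ≥ ·) with hl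
  have hlen : l.length = m := sortedEig_length hA
  have hmem : l.getD k 0 ∈ l := by
    rw [List.getD_eq_getElem l 0 (by omega : k < l.length)]
    exact List.getElem_mem _
  have : l.getD k 0 ∈ List.ofFn hA.eigenvalues :=
    (List.perm_insertionSort _ _).subset hmem
  rwa [List.mem_ofFn] at this

lemma nthEig_nonneg (hA : A.PosSemidef) (k : ℕ) : 0 ≤ nthEig A k := by
  by_cases hk : k < m
  · obtain ⟨i, hi⟩ := nthEig_mem hA.1 hk
    rw [← hi]; exact hA.eigenvalues_nonneg i
  · rw [nthEig_eq hA.1, List.getD_eq_default]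
    rw [sortedEig_length hA.1]; omega

lemma trace_eq_sum_eigenvalues (hA : A.IsHermitian) :
    A.trace = ∑ i, hA.eigenvalues i := by
  nth_rewrite 1 [hA.spectral_theorem]
  rw [Unitary.conjStarAlgAut_apply, Matrix.trace_mul_cycle]
  have hU : (star (hA.eigenvectorUnitary : Matrix (Fin m) (Fin m) ℝ)) *
      (hA.eigenvectorUnitary : Matrix (Fin m) (Fin m) ℝ) = 1 :=
    hA.eigenvectorUnitary.2.1
  rw [hU, one_mul, Matrix.trace_diagonal]
  simp

lemma nthEig_le_trace (hA : A.PosSemidef) (k : ℕ) : nthEig A k ≤ A.trace := by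
  rw [trace_eq_sum_eigenvalues hA.1]
  by_cases hk : k < m
  · obtain ⟨i, hi⟩ := nthEig_mem hA.1 hk
    rw [← hi]
    exact Finset.single_le_sum (fun j _ => hA.eigenvalues_nonneg j) (Finset.mem_univ i)
  · rw [nthEig_eq hA.1, List.getD_eq_default]
    · exact Finset.sum_nonneg fun j _ => hA.eigenvalues_nonneg j
    · rw [sortedEig_length hA.1]; omega

lemma prod_nthEig (hA : A.IsHermitian) :
    ∏ k ∈ Finset.range m, nthEig A k = A.det := by
  set l := (List.ofFn hA.eigenvalues).insertionSort (· ≥ ·) with hl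
  have hlen : l.length = m := sortedEig_length hA
  have h1 : ∏ k ∈ Finset.range m, nthEig A k = ∏ i : Fin m, nthEig A i := by
    rw [Fin.prod_univ_eq_prod_range]
  rw [h1]
  have h2 : ∀ i : Fin m, nthEig A i = l.get (Fin.cast hlen.symm i) := by
    intro i
    rw [nthEig_eq hA, ← hl, List.getD_eq_getElem l 0 (by omega : (i:ℕ) < l.length)]
    rfl
  rw [Finset.prod_congr rfl fun i _ => h2 i]
  have h3 : ∏ i : Fin m, l.get (Fin.cast hlen.symm i) = ∏ j : Fin l.length, l.get j :=
    Fintype.prod_equiv (finCongr hlen.symm) _ _ (fun i => rfl)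
  rw [h3]
  have h4 : ∏ j : Fin l.length, l.get j = l.prod := by
    conv_rhs => rw [← List.ofFn_get l]
    rw [List.prod_ofFn]
  rw [h4, (List.perm_insertionSort _ _).prod_eq, List.prod_ofFn]
  have := hA.det_eq_prod_eigenvalues
  simpa using this.symm

end B

section C
open Metric Submodule Set Finset

variable {E H : Type*} [NormedAddCommGroup H] [InnerProductSpace ℝ H]
  (Φ : E → H) {m : ℕ} (x : Fin m → E)

lemma gramM_posSemidef (c : ℝ) (hc : 0 ≤ c) : (c • gramM Φ x).PosSemidef := by
  rw [Matrix.posSemidef_iff_dotProduct_mulVec]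
  constructor
  · ext i j
    simp only [Matrix.conjTranspose_apply, Matrix.smul_apply, gramM, Matrix.of_apply,
      star_trivial, real_inner_comm]
  · intro v
    have hq : dotProduct (star v) ((c • gramM Φ x).mulVec v)
        = c * (inner ℝ (∑ i, v i • Φ (x i)) (∑ j, v j • Φ (x j)) : ℝ) := by
      simp only [dotProduct, Matrix.mulVec, Matrix.smul_apply, gramM, Matrix.of_apply,
        star_trivial, dotProduct, inner_sum, sum_inner, inner_smul_left, inner_smul_right,
        RCLike.star_def, starRingEnd_apply, star_trivial, Finset.mul_sum, Finset.sum_mul]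
      rw [Finset.sum_comm]
      refine Finset.sum_congr rfl fun i _ => Finset.sum_congr rfl fun j _ => by
        simp only [smul_eq_mul]; ring
    rw [hq]
    exact mul_nonneg hc real_inner_self_nonneg

lemma gramM_trace : (gramM Φ x).trace = ∑ i, ‖Φ (x i)‖^2 := by
  rw [Matrix.trace]
  refine Finset.sum_congr rfl fun i _ => ?_
  simp [Matrix.diag, gramM, real_inner_self_eq_norm_sq]

end C

section D
variable {E H : Type*} [NormedAddCommGroup H] [InnerProductSpace ℝ H]
  {Ω : Set E} {Φ : E → H}

lemma kolmWidth_bddBelow (n : ℕ) : BddBelow (Set.range fun L :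
    {L : Submodule ℝ H // ∃ s : Finset H, s.card ≤ n ∧ L = Submodule.span ℝ (s : Set H)} =>
    ⨆ x : Ω, Metric.infDist (Φ (x : E)) (L.1 : Set H)) :=
  ⟨0, by rintro y ⟨L, rfl⟩; exact Real.iSup_nonneg fun x => Metric.infDist_nonneg⟩

instance kolmWidth_index_nonempty (n : ℕ) : Nonempty
    {L : Submodule ℝ H // ∃ s : Finset H, s.card ≤ n ∧ L = Submodule.span ℝ (s : Set H)} :=
  ⟨⟨⊥, ∅, by simp, by simp⟩⟩

lemma kolmWidth_le_iSup {n : ℕ} (v : Fin n → H) :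
    kolmWidth Ω Φ n ≤ ⨆ x : Ω, Metric.infDist (Φ (x : E)) (Submodule.span ℝ (Set.range v) : Set H) := by
  classical
  have hidx : ∃ s : Finset H, s.card ≤ n ∧
      Submodule.span ℝ (Set.range v) = Submodule.span ℝ (s : Set H) := by
    refine ⟨Finset.univ.image v, ?_, ?_⟩
    · exact (Finset.card_image_le).trans (by simp)
    · rw [Finset.coe_image, Finset.coe_univ, Set.image_univ]
  exact ciInf_le (kolmWidth_bddBelow n) ⟨Submodule.span ℝ (Set.range v), hidx⟩

lemma kolmWidth_antitone : Antitone (kolmWidth Ω Φ) := by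
  intro a b hab
  refine le_ciInf fun L => ?_
  obtain ⟨s, hs, hL⟩ := L.2
  exact ciInf_le (kolmWidth_bddBelow b) ⟨L.1, s, hs.trans hab, hL⟩

end D

section E
open Metric Submodule Set Finset

variable {E H : Type*} [TopologicalSpace E] [NormedAddCommGroup H] [InnerProductSpace ℝ H]

/-- choose a point of `Ω` maximizing the distance of `Φ y` to `S`. -/
def argmaxDist {Ω : Set E} {Φ : E → H} (hΩ : IsCompact Ω) (hne : Ω.Nonempty)
    (hΦ : ContinuousOn Φ Ω) (S : Set H) : E :=
  (hΩ.exists_isMaxOn hne ((continuous_infDist_pt S).comp_continuousOn hΦ)).choose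

lemma argmaxDist_mem {Ω : Set E} {Φ : E → H} (hΩ : IsCompact Ω) (hne : Ω.Nonempty)
    (hΦ : ContinuousOn Φ Ω) (S : Set H) : argmaxDist hΩ hne hΦ S ∈ Ω :=
  (hΩ.exists_isMaxOn hne ((continuous_infDist_pt S).comp_continuousOn hΦ)).choose_spec.1

lemma argmaxDist_max {Ω : Set E} {Φ : E → H} (hΩ : IsCompact Ω) (hne : Ω.Nonempty)
    (hΦ : ContinuousOn Φ Ω) (S : Set H) {y : E} (hy : y ∈ Ω) :
    infDist (Φ y) S ≤ infDist (Φ (argmaxDist hΩ hne hΦ S)) S :=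
  (hΩ.exists_isMaxOn hne ((continuous_infDist_pt S).comp_continuousOn hΦ)).choose_spec.2 hy

/-- the greedy sequence. -/
def greedySeq {Ω : Set E} {Φ : E → H} (hΩ : IsCompact Ω) (hne : Ω.Nonempty)
    (hΦ : ContinuousOn Φ Ω) : ℕ → E
  | n => argmaxDist hΩ hne hΦ
      (Submodule.span ℝ (Set.range fun i : Fin n => Φ (greedySeq hΩ hne hΦ i)) : Set H)
  termination_by n => n
  decreasing_by exact i.2

lemma greedySeq_mem {Ω : Set E} {Φ : E → H} (hΩ : IsCompact Ω) (hne : Ω.Nonempty)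
    (hΦ : ContinuousOn Φ Ω) (n : ℕ) : greedySeq hΩ hne hΦ n ∈ Ω := by
  rw [greedySeq]
  exact argmaxDist_mem _ _ _ _

lemma greedySeq_max {Ω : Set E} {Φ : E → H} (hΩ : IsCompact Ω) (hne : Ω.Nonempty)
    (hΦ : ContinuousOn Φ Ω) (n : ℕ) {y : E} (hy : y ∈ Ω) :
    infDist (Φ y) (Submodule.span ℝ (Set.range fun i : Fin n => Φ (greedySeq hΩ hne hΦ i)) : Set H)
      ≤ infDist (Φ (greedySeq hΩ hne hΦ n))
        (Submodule.span ℝ (Set.range fun i : Fin n => Φ (greedySeq hΩ hne hΦ i)) : Set H) := by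
  conv_rhs => rw [greedySeq]
  exact argmaxDist_max _ _ _ _ hy

end E

lemma aux_pow_self_le_exp_factorial : ∀ M : ℕ, (M:ℝ)^M ≤ Real.exp 1 ^ M * M.factorial := by
  intro M
  induction M with
  | zero => simp
  | succ n ih =>
    rcases Nat.eq_zero_or_pos n with rfl | hn
    · simpa using Real.one_le_exp zero_le_one
    have hn' : (0:ℝ) < n := by exact_mod_cast hn
    have key : ((n:ℝ)+1)^n ≤ Real.exp 1 * (n:ℝ)^n := by
      have h1 : ((n:ℝ)+1) = n * (1 + 1/n) := by field_simp
      have h2 : (1 + 1/(n:ℝ))^n ≤ Real.exp 1 := by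
        have := Real.add_one_le_exp (1/(n:ℝ))
        have h3 : (1 + 1/(n:ℝ))^n ≤ Real.exp (1/n) ^ n := by
          apply pow_le_pow_left₀ (by positivity)
          linarith
        rw [← Real.exp_nat_mul] at h3
        rw [mul_one_div, div_self (ne_of_gt hn')] at h3
        exact h3
      calc ((n:ℝ)+1)^n = (n:ℝ)^n * (1 + 1/n)^n := by rw [h1, mul_pow]
        _ ≤ (n:ℝ)^n * Real.exp 1 := by
            apply mul_le_mul_of_nonneg_left h2 (by positivity)
        _ = Real.exp 1 * (n:ℝ)^n := mul_comm _ _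
    have e1 : (0:ℝ) < Real.exp 1 := Real.exp_pos 1
    push_cast
    calc ((n:ℝ)+1)^(n+1) = ((n:ℝ)+1) * ((n:ℝ)+1)^n := by ring
      _ ≤ ((n:ℝ)+1) * (Real.exp 1 * (n:ℝ)^n) := by
          apply mul_le_mul_of_nonneg_left key (by positivity)
      _ ≤ ((n:ℝ)+1) * (Real.exp 1 * (Real.exp 1 ^ n * n.factorial)) := by
          apply mul_le_mul_of_nonneg_left (mul_le_mul_of_nonneg_left ih (le_of_lt e1)) (by positivity)
      _ = Real.exp 1 ^ (n+1) * (((n:ℝ)+1) * n.factorial) := by ring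
      _ = Real.exp 1 ^ (n+1) * ((n+1).factorial) := by
          rw [Nat.factorial_succ]; push_cast; ring

lemma aux_image_Iio {E H : Type*} [NormedAddCommGroup H] [InnerProductSpace ℝ H]
    (Φ : E → H) (x : ℕ → E) {M : ℕ} (k : Fin M) :
    ((fun i : Fin M => Φ (x i)) '' Set.Iio k) = Set.range fun i : Fin (k:ℕ) => Φ (x (i:ℕ)) := by
  ext z
  constructor
  · rintro ⟨j, hj, rfl⟩
    exact ⟨⟨(j:ℕ), hj⟩, rfl⟩
  · rintro ⟨i, rfl⟩
    refine ⟨⟨(i:ℕ), lt_trans i.2 k.2⟩, ?_, rfl⟩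
    simpa [Set.mem_Iio, Fin.lt_def] using i.2


end AuxA

/-- assuming `w_K(n) > 0` for all `n`, there is a sequence `(x_i) ⊆ Ω` such
that `limsup_{n→∞} sup_{m≥1} n·λ_n((1/m)[K(x_i,x_j)]_{i,j≤m}) / w_K(n)² ≥ 1/e`, the
eigenvalues being those of the empirical kernel matrices (equivalently, of the integral
operators of the empirical measures `μ_m = (1/m)Σ_{i≤m} δ_{x_i}`). The limsup–sup
inequality is stated in its unfolded form: for every `ε > 0` and every `N` there are
`n ≥ max(N,1)` and `m ≥ 1` with `n λ_n / w_K(n)² ≥ 1/e − ε`. -/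
theorem exists_seq_limsup_eig_ge {d : ℕ} {H : Type*}
    [NormedAddCommGroup H] [InnerProductSpace ℝ H]
    (Ω : Set (EuclideanSpace ℝ (Fin d))) (hΩ : IsCompact Ω) (hne : Ω.Nonempty)
    (Φ : EuclideanSpace ℝ (Fin d) → H) (hΦ : ContinuousOn Φ Ω)
    (hw : ∀ n : ℕ, 0 < kolmWidth Ω Φ n) :
    ∃ x : ℕ → EuclideanSpace ℝ (Fin d), (∀ i, x i ∈ Ω) ∧
      ∀ ε : ℝ, 0 < ε → ∀ N : ℕ, ∃ n : ℕ, N ≤ n ∧ 1 ≤ n ∧ ∃ m : ℕ, 1 ≤ m ∧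
        1 / Real.exp 1 - ε ≤
          (n : ℝ) * nthEig (((1 : ℝ) / m) • gramM Φ (fun i : Fin m => x i)) (n - 1) /
            (kolmWidth Ω Φ n) ^ 2 := by
  classical
  refine ⟨greedySeq hΩ hne hΦ, fun i => greedySeq_mem hΩ hne hΦ i, ?_⟩
  set x : ℕ → EuclideanSpace ℝ (Fin d) := greedySeq hΩ hne hΦ with hxdef
  intro ε hε N
  set e1 : ℝ := Real.exp 1 with he1
  have he1pos : 0 < e1 := Real.exp_pos 1
  by_cases hεe : 1 / e1 - ε ≤ 0
  · refine ⟨max N 1, le_max_left _ _, le_max_right _ _, 1, le_rfl, ?_⟩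
    have h0 : (0:ℝ) ≤ (max N 1 : ℕ) *
        nthEig (((1:ℝ)/(1:ℕ)) • gramM Φ (fun i : Fin 1 => x i)) (max N 1 - 1) /
        (kolmWidth Ω Φ (max N 1))^2 := by
      apply div_nonneg _ (sq_nonneg _)
      exact mul_nonneg (Nat.cast_nonneg _)
        (nthEig_nonneg (gramM_posSemidef Φ _ _ (by norm_num)) _)
    linarith
  push_neg at hεe
  set c : ℝ := 1 / e1 - ε with hcdef
  have hc : 0 < c := hεe
  have hclt : c < 1 / e1 := by rw [hcdef]; linarith
  have hce : c * e1 < 1 := by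
    calc c * e1 < (1/e1) * e1 := mul_lt_mul_of_pos_right hclt he1pos
      _ = 1 := by field_simp
  by_contra hcon
  push_neg at hcon
  set N₀ := max N 1 with hN0
  have hN0_1 : 1 ≤ N₀ := le_max_right _ _
  obtain ⟨C, hC⟩ := hΩ.exists_bound_of_continuousOn hΦ
  set B : ℝ := (max C 0)^2 + 1 with hB
  have hBpos : 0 < B := by positivity
  have hnormsq : ∀ i : ℕ, ‖Φ (x i)‖^2 ≤ B := by
    intro i
    have h1 : ‖Φ (x i)‖ ≤ max C 0 :=
      le_trans (hC _ (greedySeq_mem hΩ hne hΦ i)) (le_max_left _ _)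
    nlinarith [norm_nonneg (Φ (x i))]
  set w := kolmWidth Ω Φ with hwdef
  set W : ℝ := ∏ k ∈ Finset.range (N₀-1), w (k+1)^2 with hW
  set Pinv : ℝ := ∏ k ∈ Finset.range (N₀-1), ((k:ℝ)+1) with hP
  have hWpos : 0 < W := Finset.prod_pos fun k _ => pow_pos (hw _) 2
  have hPpos : 0 < Pinv := Finset.prod_pos fun k _ => by positivity
  set δ : ℝ := W * c^(N₀-1) / (B^(N₀-1) * Pinv) with hδ
  have hδpos : 0 < δ := by positivity
  have key : ∀ M : ℕ, N₀ ≤ M → δ ≤ (c * e1)^M := by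
    intro M hM
    have hM1 : 1 ≤ M := le_trans hN0_1 hM
    have hMpos : (0:ℝ) < M := by exact_mod_cast hM1
    set f : Fin M → H := fun i => Φ (x (i:ℕ)) with hf
    set g := InnerProductSpace.gramSchmidt ℝ f with hg
    have hwg : ∀ k : Fin M, w (k:ℕ) ≤ ‖g k‖ := by
      intro k
      have h1 : Metric.infDist (f k) (Submodule.span ℝ (f '' Set.Iio k) : Set H) = ‖g k‖ :=
        aux_infDist_eq_norm_gs f k
      rw [hf, aux_image_Iio Φ x k] at h1
      have h3 := kolmWidth_le_iSup (Ω := Ω) (Φ := Φ) (fun i : Fin (k:ℕ) => Φ (x (i:ℕ)))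
      have h4 : (⨆ y : Ω, Metric.infDist (Φ (y : EuclideanSpace ℝ (Fin d)))
            (Submodule.span ℝ (Set.range fun i : Fin (k:ℕ) => Φ (x (i:ℕ))) : Set H))
          ≤ Metric.infDist (Φ (x (k:ℕ)))
            (Submodule.span ℝ (Set.range fun i : Fin (k:ℕ) => Φ (x (i:ℕ))) : Set H) :=
        Real.iSup_le (fun y => greedySeq_max hΩ hne hΦ (k:ℕ) y.2) Metric.infDist_nonneg
      calc w (k:ℕ) ≤ _ := h3
        _ ≤ _ := h4
        _ = ‖g k‖ := h1
    have hgpos : ∀ k : Fin M, 0 < ‖g k‖ := fun k => lt_of_lt_of_le (hw _) (hwg k)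
    have hgne : ∀ k, g k ≠ 0 := fun k => norm_ne_zero_iff.1 (ne_of_gt (hgpos k))
    have hdet : (gramM Φ (fun i : Fin M => x (i:ℕ))).det = ∏ k, ‖g k‖^2 :=
      aux_det_gram f hgne
    set A : Matrix (Fin M) (Fin M) ℝ := ((1:ℝ)/(M:ℕ)) • gramM Φ (fun i : Fin M => x (i:ℕ))
      with hA
    have hApsd : A.PosSemidef := gramM_posSemidef Φ _ _ (by positivity)
    have hdetA : A.det = ((1:ℝ)/(M:ℝ))^M * ∏ k, ‖g k‖^2 := by
      rw [hA, Matrix.det_smul, hdet, Fintype.card_fin]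
    have htr : A.trace ≤ B := by
      rw [hA, Matrix.trace_smul, gramM_trace, smul_eq_mul]
      have hsum : ∑ i : Fin M, ‖Φ (x (i:ℕ))‖^2 ≤ (M:ℝ) * B := by
        calc ∑ i : Fin M, ‖Φ (x (i:ℕ))‖^2 ≤ ∑ _i : Fin M, B :=
              Finset.sum_le_sum fun i _ => hnormsq (i:ℕ)
          _ = (M:ℝ) * B := by
              rw [Finset.sum_const, Finset.card_univ, Fintype.card_fin, nsmul_eq_mul]
      calc (1/(M:ℝ)) * ∑ i : Fin M, ‖Φ (x (i:ℕ))‖^2 ≤ (1/(M:ℝ)) * ((M:ℝ) * B) :=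
            mul_le_mul_of_nonneg_left hsum (by positivity)
        _ = B := by field_simp
    have hLB : ∀ k : ℕ, nthEig A k ≤ B := fun k => (nthEig_le_trace hApsd k).trans htr
    have hL0 : ∀ k : ℕ, 0 ≤ nthEig A k := nthEig_nonneg hApsd
    have hhyp : ∀ k : ℕ, N₀ - 1 ≤ k → nthEig A k < c * w (k+1)^2 / ((k:ℝ)+1) := by
      intro k hk
      have hNle : N ≤ k + 1 := le_trans (le_max_left N 1) (by omega)
      have h := hcon (k+1) hNle (by omega) M hM1
      rw [Nat.add_sub_cancel] at h
      have hw2 : 0 < w (k+1)^2 := pow_pos (hw _) 2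
      rw [div_lt_iff₀ hw2] at h
      have hkpos : (0:ℝ) < (k:ℝ)+1 := by positivity
      rw [lt_div_iff₀ hkpos]
      push_cast at h
      calc nthEig A k * ((k:ℝ)+1) = ((k:ℝ)+1) * nthEig A k := by ring
        _ < c * w (k+1)^2 := h
    have hprodL : ∏ k ∈ Finset.range M, nthEig A k = A.det := prod_nthEig hApsd.1
    have hgw : (∏ k ∈ Finset.range M, w k ^2) ≤ ∏ k : Fin M, ‖g k‖^2 := by
      rw [← Fin.prod_univ_eq_prod_range (fun k => w k ^2) M]
      exact Finset.prod_le_prod (fun k _ => sq_nonneg _)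
        (fun k _ => pow_le_pow_left₀ (le_of_lt (hw _)) (hwg k) 2)
    have hwshift : (∏ k ∈ Finset.range M, w (k+1)^2) ≤ ∏ k ∈ Finset.range M, w k^2 :=
      Finset.prod_le_prod (fun k _ => sq_nonneg _)
        (fun k _ => pow_le_pow_left₀ (le_of_lt (hw _)) (kolmWidth_antitone (by omega)) 2)
    set ub : ℕ → ℝ := fun k => if k < N₀ - 1 then B else c * w (k+1)^2 * (1/((k:ℝ)+1))
      with hub
    have hub0 : ∀ k, 0 ≤ ub k := by
      intro k
      rw [hub]
      dsimp only
      split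
      · exact hBpos.le
      · positivity
    have hLub : ∀ k ∈ Finset.range M, nthEig A k ≤ ub k := by
      intro k _
      rw [hub]
      dsimp only
      split
      · exact hLB k
      · next hk =>
        have h := (hhyp k (by omega)).le
        calc nthEig A k ≤ c * w (k+1)^2 / ((k:ℝ)+1) := h
          _ = c * w (k+1)^2 * (1/((k:ℝ)+1)) := by ring
    have hprod_ub : (∏ k ∈ Finset.range M, nthEig A k) ≤ ∏ k ∈ Finset.range M, ub k :=
      Finset.prod_le_prod (fun k _ => hL0 k) hLub
    set T : ℝ := ∏ k ∈ Finset.Ico (N₀-1) M, w (k+1)^2 with hT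
    set Q : ℝ := ∏ k ∈ Finset.Ico (N₀-1) M, (1/((k:ℝ)+1)) with hQ
    set Qinv : ℝ := ∏ k ∈ Finset.Ico (N₀-1) M, ((k:ℝ)+1) with hQinv
    have hTpos : 0 < T := Finset.prod_pos fun k _ => pow_pos (hw _) 2
    have hQinvpos : 0 < Qinv := Finset.prod_pos fun k _ => by positivity
    have hQval : Q = 1/Qinv := by
      rw [hQ, hQinv, one_div, ← Finset.prod_inv_distrib]
      exact Finset.prod_congr rfl fun k _ => one_div _
    have hN0M : N₀ - 1 ≤ M := by omega
    have hsplit : (∏ k ∈ Finset.range M, ub k)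
        = B^(N₀-1) * (c^(M-(N₀-1)) * T * Q) := by
      rw [← Finset.prod_range_mul_prod_Ico ub hN0M]
      have h1 : (∏ k ∈ Finset.range (N₀-1), ub k) = B^(N₀-1) := by
        rw [Finset.prod_congr rfl (fun k hk => ?_), Finset.prod_const, Finset.card_range]
        rw [hub]; dsimp only
        rw [if_pos (Finset.mem_range.1 hk)]
      have h2 : (∏ k ∈ Finset.Ico (N₀-1) M, ub k) = c^(M-(N₀-1)) * T * Q := by
        have hcongr : ∀ k ∈ Finset.Ico (N₀-1) M,
            ub k = c * (w (k+1)^2 * (1/((k:ℝ)+1))) := by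
          intro k hk
          rw [hub]; dsimp only
          rw [if_neg (by have := (Finset.mem_Ico.1 hk).1; omega)]
          ring
        rw [Finset.prod_congr rfl hcongr, Finset.prod_mul_distrib, Finset.prod_const,
          Nat.card_Ico, Finset.prod_mul_distrib, ← hT, ← hQ]
        ring
      rw [h1, h2]
    have hwsplit : W * T = ∏ k ∈ Finset.range M, w (k+1)^2 := by
      rw [hW, hT, Finset.prod_range_mul_prod_Ico _ hN0M]
    have hfac : Pinv * Qinv = (M.factorial : ℝ) := by
      rw [hP, hQinv, Finset.prod_range_mul_prod_Ico _ hN0M]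
      rw [show (fun k : ℕ => ((k:ℝ)+1)) = (fun k : ℕ => (((k+1:ℕ)):ℝ)) from by
        funext k; push_cast; ring]
      rw [← Nat.cast_prod]
      rw [Finset.prod_range_add_one_eq_factorial]
    -- main chain
    have hMM : (0:ℝ) < (M:ℝ)^M := by positivity
    have step1 : ((1:ℝ)/(M:ℝ))^M * (W * T) ≤ B^(N₀-1) * (c^(M-(N₀-1)) * T * Q) := by
      calc ((1:ℝ)/(M:ℝ))^M * (W * T)
          = ((1:ℝ)/(M:ℝ))^M * ∏ k ∈ Finset.range M, w (k+1)^2 := by rw [hwsplit]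
        _ ≤ ((1:ℝ)/(M:ℝ))^M * ∏ k ∈ Finset.range M, w k^2 :=
            mul_le_mul_of_nonneg_left hwshift (by positivity)
        _ ≤ ((1:ℝ)/(M:ℝ))^M * ∏ k : Fin M, ‖g k‖^2 :=
            mul_le_mul_of_nonneg_left hgw (by positivity)
        _ = A.det := hdetA.symm
        _ = ∏ k ∈ Finset.range M, nthEig A k := hprodL.symm
        _ ≤ ∏ k ∈ Finset.range M, ub k := hprod_ub
        _ = B^(N₀-1) * (c^(M-(N₀-1)) * T * Q) := hsplit
    have step2 : ((1:ℝ)/(M:ℝ))^M * W ≤ B^(N₀-1) * c^(M-(N₀-1)) * Q := by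
      have h := step1
      have h' : (((1:ℝ)/(M:ℝ))^M * W) * T ≤ (B^(N₀-1) * c^(M-(N₀-1)) * Q) * T := by
        calc (((1:ℝ)/(M:ℝ))^M * W) * T = ((1:ℝ)/(M:ℝ))^M * (W * T) := by ring
          _ ≤ B^(N₀-1) * (c^(M-(N₀-1)) * T * Q) := h
          _ = (B^(N₀-1) * c^(M-(N₀-1)) * Q) * T := by ring
      exact le_of_mul_le_mul_right h' hTpos
    have step3 : W * Qinv ≤ B^(N₀-1) * c^(M-(N₀-1)) * (M:ℝ)^M := by
      have h : W / (M:ℝ)^M ≤ (B^(N₀-1) * c^(M-(N₀-1))) / Qinv := by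
        have := step2
        rw [hQval, div_pow, one_pow] at this
        calc W / (M:ℝ)^M = 1/(M:ℝ)^M * W := by ring
          _ ≤ B^(N₀-1) * c^(M-(N₀-1)) * (1/Qinv) := this
          _ = (B^(N₀-1) * c^(M-(N₀-1))) / Qinv := by ring
      rw [div_le_div_iff₀ hMM hQinvpos] at h
      exact h
    have step4 : W * Qinv ≤ B^(N₀-1) * c^(M-(N₀-1)) * (e1^M * (M.factorial:ℝ)) := by
      refine le_trans step3 ?_
      have hMe := aux_pow_self_le_exp_factorial M
      exact mul_le_mul_of_nonneg_left hMe (by positivity)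
    have step5 : W ≤ B^(N₀-1) * c^(M-(N₀-1)) * e1^M * Pinv := by
      have h : W * Qinv ≤ (B^(N₀-1) * c^(M-(N₀-1)) * e1^M * Pinv) * Qinv := by
        calc W * Qinv ≤ B^(N₀-1) * c^(M-(N₀-1)) * (e1^M * (M.factorial:ℝ)) := step4
          _ = B^(N₀-1) * c^(M-(N₀-1)) * (e1^M * (Pinv * Qinv)) := by rw [hfac]
          _ = (B^(N₀-1) * c^(M-(N₀-1)) * e1^M * Pinv) * Qinv := by ring
      exact le_of_mul_le_mul_right h hQinvpos
    have hpowc : c^(M-(N₀-1)) * c^(N₀-1) = c^M := by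
      rw [← pow_add, Nat.sub_add_cancel hN0M]
    calc δ = W * (c^(N₀-1) / (B^(N₀-1) * Pinv)) := by rw [hδ]; ring
      _ ≤ (B^(N₀-1) * c^(M-(N₀-1)) * e1^M * Pinv) * (c^(N₀-1) / (B^(N₀-1) * Pinv)) :=
          mul_le_mul_of_nonneg_right step5 (by positivity)
      _ = (c^(M-(N₀-1)) * c^(N₀-1)) * e1^M := by
          field_simp
      _ = c^M * e1^M := by rw [hpowc]
      _ = (c*e1)^M := (mul_pow c e1 M).symm
  obtain ⟨n0, hn0⟩ := exists_pow_lt_of_lt_one hδpos hce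
  have h1 := key (max n0 N₀) (le_max_right _ _)
  have h2 : (c*e1)^(max n0 N₀) ≤ (c*e1)^n0 :=
    pow_le_pow_of_le_one (by positivity) hce.le (le_max_left _ _)
  linarith

end
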